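/- On the domain A where the triangle inequalities hold for (e^{x₁}, e^{x₂}, e^{x₃}), the partial derivative of the function f(x₁,x₂,x₃) = Σ α_i x_i + Σ Л(α_i) with respect to x_i equals α_i, the angle opposite the side of length e^{x_i} in the triangle with side lengths e^{x₁}, e^{x₂}, e^{x₃}. -/

import Mathlib

open Real
open Set MeasureTheory intervalIntegral

lemma tri_D_pos {A B C : ℝ} (hA : 0 < A) (hB : 0 < B) (hC : 0 < C)
    (h1 : A < B + C) (h2 : B < C + A) (h3 : C < A + B) :
    0 < (A+B+C)*(B+C-A)*(C+A-B)*(A+B-C) := by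
  apply mul_pos (mul_pos (mul_pos (by linarith) (by linarith)) (by linarith)) (by linarith)

lemma tri_u_lt_one {A B C : ℝ} (hA : 0 < A) (hB : 0 < B) (hC : 0 < C)
    (h2 : B < C + A) (h3 : C < A + B) :
    (B^2+C^2-A^2)/(2*B*C) < 1 := by
  rw [div_lt_one (by positivity)]
  nlinarith

lemma tri_neg_one_lt_u {A B C : ℝ} (hA : 0 < A) (hB : 0 < B) (hC : 0 < C)
    (h1 : A < B + C) :
    -1 < (B^2+C^2-A^2)/(2*B*C) := by
  rw [show (-1:ℝ) = -(2*B*C)/(2*B*C) by field_simp, div_lt_div_iff_of_pos_right (by positivity)]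
  nlinarith

lemma tri_sin_arccos {A B C : ℝ} (hA : 0 < A) (hB : 0 < B) (hC : 0 < C)
    (h1 : A < B + C) (h2 : B < C + A) (h3 : C < A + B) :
    Real.sin (Real.arccos ((B^2+C^2-A^2)/(2*B*C)))
      = Real.sqrt ((A+B+C)*(B+C-A)*(C+A-B)*(A+B-C)) / (2*B*C) := by
  have hD := tri_D_pos hA hB hC h1 h2 h3
  rw [Real.sin_arccos]
  have key : 1 - ((B^2+C^2-A^2)/(2*B*C))^2
      = (Real.sqrt ((A+B+C)*(B+C-A)*(C+A-B)*(A+B-C)) / (2*B*C))^2 := by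
    rw [div_pow, div_pow, Real.sq_sqrt hD.le]
    field_simp
    ring
  rw [key, Real.sqrt_sq (by positivity)]

lemma arccos_lt_pi' {x : ℝ} (h : -1 < x) : Real.arccos x < π := by
  rcases lt_or_ge x 1 with hx | hx
  · rcases lt_or_eq_of_le (Real.arccos_le_pi x) with h' | h'
    · exact h'
    · exfalso
      have hcc := Real.cos_arccos h.le hx.le
      rw [h', Real.cos_pi] at hcc
      linarith
  · have : Real.arccos x = 0 := by
      rw [Real.arccos_eq_zero]; exact hx
    rw [this]; exact Real.pi_pos

lemma tri_arccos_sum {A B C : ℝ} (hA : 0 < A) (hB : 0 < B) (hC : 0 < C)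
    (h1 : A < B + C) (h2 : B < C + A) (h3 : C < A + B) :
    Real.arccos ((B^2+C^2-A^2)/(2*B*C)) + Real.arccos ((C^2+A^2-B^2)/(2*C*A))
      + Real.arccos ((A^2+B^2-C^2)/(2*A*B)) = π := by
  have hD := tri_D_pos hA hB hC h1 h2 h3
  set D := (A+B+C)*(B+C-A)*(C+A-B)*(A+B-C) with hDdef
  have s1 : Real.sin (Real.arccos ((B^2+C^2-A^2)/(2*B*C))) = Real.sqrt D / (2*B*C) :=
    tri_sin_arccos hA hB hC h1 h2 h3
  have s2 : Real.sin (Real.arccos ((C^2+A^2-B^2)/(2*C*A))) = Real.sqrt D / (2*C*A) := by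
    have := tri_sin_arccos hB hC hA (by linarith) (by linarith) (by linarith)
    rw [this, show (B+C+A)*(C+A-B)*(A+B-C)*(B+C-A) = D by rw [hDdef]; ring]
  have s3 : Real.sin (Real.arccos ((A^2+B^2-C^2)/(2*A*B))) = Real.sqrt D / (2*A*B) := by
    have := tri_sin_arccos hC hA hB (by linarith) (by linarith) (by linarith)
    rw [this, show (C+A+B)*(A+B-C)*(B+C-A)*(C+A-B) = D by rw [hDdef]; ring]
  have hu1l := tri_neg_one_lt_u hA hB hC h1
  have hu1r := tri_u_lt_one hA hB hC h2 h3
  have hu2l := tri_neg_one_lt_u hB hC hA h2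
  have hu2r := tri_u_lt_one hB hC hA h3 h1
  have hu3l := tri_neg_one_lt_u hC hA hB h3
  have hu3r := tri_u_lt_one hC hA hB h1 h2
  set θ := Real.arccos ((C^2+A^2-B^2)/(2*C*A)) + Real.arccos ((A^2+B^2-C^2)/(2*A*B)) with hθ
  have hDD : Real.sqrt D * Real.sqrt D = D := Real.mul_self_sqrt hD.le
  have hsqpos : 0 < Real.sqrt D := Real.sqrt_pos.2 hD
  have hcosθ : Real.cos θ = -((B^2+C^2-A^2)/(2*B*C)) := by
    rw [hθ, Real.cos_add, s2, s3, Real.cos_arccos (by linarith) (by linarith),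
      Real.cos_arccos (by linarith) (by linarith),
      show Real.sqrt D/(2*C*A) * (Real.sqrt D/(2*A*B)) = D/(2*C*A*(2*A*B)) by
        rw [div_mul_div_comm, hDD]]
    field_simp
    ring
  have hsinθ : Real.sin θ = Real.sqrt D / (2*B*C) := by
    rw [hθ, Real.sin_add, s2, s3, Real.cos_arccos (by linarith) (by linarith),
      Real.cos_arccos (by linarith) (by linarith)]
    field_simp
    ring
  have hθpos : 0 < θ := by
    have := Real.arccos_pos.2 hu2r
    have := Real.arccos_nonneg ((A^2+B^2-C^2)/(2*A*B))
    rw [hθ]; linarith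
  have hθlt : θ < π := by
    by_contra hcon
    push_neg at hcon
    have h2π : θ < 2*π := by
      have := Real.arccos_le_pi ((C^2+A^2-B^2)/(2*C*A))
      have hlt := arccos_lt_pi' hu3l
      rw [hθ]; linarith
    have hnn : 0 ≤ Real.sin (θ - π) :=
      Real.sin_nonneg_of_nonneg_of_le_pi (by linarith) (by linarith)
    rw [Real.sin_sub_pi] at hnn
    have : 0 < Real.sin θ := by rw [hsinθ]; positivity
    linarith
  have hkey : θ = π - Real.arccos ((B^2+C^2-A^2)/(2*B*C)) := by
    apply Real.injOn_cos ⟨hθpos.le, hθlt.le⟩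
      ⟨by linarith [Real.arccos_le_pi ((B^2+C^2-A^2)/(2*B*C))],
       by linarith [Real.arccos_nonneg ((B^2+C^2-A^2)/(2*B*C))]⟩
    rw [Real.cos_pi_sub, Real.cos_arccos (by linarith) (by linarith), hcosθ]
  linarith

lemma tri_law_of_sines {A B C : ℝ} (hA : 0 < A) (hB : 0 < B) (hC : 0 < C)
    (h1 : A < B + C) (h2 : B < C + A) (h3 : C < A + B) :
    A * Real.sin (Real.arccos ((C^2+A^2-B^2)/(2*C*A)))
      = B * Real.sin (Real.arccos ((B^2+C^2-A^2)/(2*B*C))) := by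
  have hD := tri_D_pos hA hB hC h1 h2 h3
  have s1 := tri_sin_arccos hA hB hC h1 h2 h3
  have s2 := tri_sin_arccos hB hC hA (by linarith) (by linarith) (by linarith)
  rw [s1, s2, show (B+C+A)*(C+A-B)*(A+B-C)*(B+C-A) = (A+B+C)*(B+C-A)*(C+A-B)*(A+B-C) by ring]
  field_simp

/-- Milnor's Lobachevsky function Л(α) = −∫₀^α log|2 sin t| dt. -/
noncomputable def Lob (α : ℝ) : ℝ := -∫ t in (0:ℝ)..α, Real.log (2 * Real.sin t)

lemma intervalIntegrable_log_zero {α : ℝ} (hα : 0 < α) :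
    IntervalIntegrable Real.log volume 0 α := by
  have base : ∀ m : ℝ, 0 < m → m ≤ 1 → IntervalIntegrable Real.log volume 0 m := by
    intro m hm hm1
    have h := integrableOn_deriv_of_nonneg (g := fun t => t - t * Real.log t)
      (g' := fun t => -Real.log t) (a := 0) (b := m)
      ((continuous_id.sub Real.continuous_mul_log).continuousOn)
      (fun x hx => by
        have := (hasDerivAt_id x).sub (Real.hasDerivAt_mul_log hx.1.ne')
        exact this.congr_deriv (by ring))
      (fun x hx => by
        show (0:ℝ) ≤ -Real.log x
        have : Real.log x ≤ 0 := Real.log_nonpos hx.1.le (hx.2.le.trans hm1)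
        linarith)
    rw [intervalIntegrable_iff_integrableOn_Ioc_of_le hm.le]
    exact MeasureTheory.integrable_neg_iff.1 h
  rcases le_or_gt α 1 with h | h
  · exact base α hα h
  · exact (base 1 one_pos le_rfl).trans
      (intervalIntegrable_log (by rw [Set.uIcc_of_le h.le]; intro hmem; exact absurd hmem.1 (by norm_num)))

lemma logsin_intervalIntegrable {α : ℝ} (h0 : 0 < α) (hπ : α < π) :
    IntervalIntegrable (fun t => Real.log (2 * Real.sin t)) volume 0 α := by
  rw [intervalIntegrable_iff_integrableOn_Ioc_of_le h0.le]
  have hsinα : 0 < Real.sin α := Real.sin_pos_of_pos_of_lt_pi h0 hπ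
  set c := Real.sin α / α with hc
  have hcpos : 0 < c := div_pos hsinα h0
  have hsin_lb : ∀ t ∈ Set.Ioc (0:ℝ) α, c * t ≤ Real.sin t := by
    intro t ht
    have hconc := strictConcaveOn_sin_Icc.concaveOn.2
      (Set.mem_Icc.2 ⟨le_rfl, Real.pi_pos.le⟩) (Set.mem_Icc.2 ⟨h0.le, hπ.le⟩)
      (show (0:ℝ) ≤ 1 - t/α by
        have : t / α ≤ 1 := (div_le_one h0).2 ht.2
        linarith)
      (show (0:ℝ) ≤ t/α from div_nonneg ht.1.le h0.le)
      (show (1 - t/α) + t/α = 1 by ring)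
    simp only [smul_eq_mul, Real.sin_zero, mul_zero, zero_add] at hconc
    rw [div_mul_cancel₀ t h0.ne'] at hconc
    calc c * t = t/α * Real.sin α := by rw [hc]; ring
    _ ≤ Real.sin t := hconc
  have hmeas : AEStronglyMeasurable (fun t => Real.log (2 * Real.sin t))
      (volume.restrict (Set.Ioc 0 α)) :=
    (Real.measurable_log.comp (Real.continuous_sin.measurable.const_mul 2)).aestronglyMeasurable
  have hlogint : IntegrableOn (fun t => |Real.log (2*c)| + |Real.log 2| + 2 * |Real.log t|)
      (Set.Ioc 0 α) volume := by
    apply Integrable.add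
    · exact integrableOn_const measure_Ioc_lt_top.ne
    · have := (intervalIntegrable_log_zero h0)
      rw [intervalIntegrable_iff_integrableOn_Ioc_of_le h0.le] at this
      exact this.abs.const_mul 2
  apply Integrable.mono' hlogint hmeas
  rw [ae_restrict_iff' measurableSet_Ioc]
  filter_upwards with t
  intro ht
  have ht0 : 0 < t := ht.1
  have hsint : 0 < Real.sin t :=
    Real.sin_pos_of_pos_of_lt_pi ht0 (lt_of_le_of_lt ht.2 hπ)
  have hub : Real.log (2 * Real.sin t) ≤ Real.log 2 + Real.log t := by
    rw [← Real.log_mul (by norm_num) ht0.ne']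
    apply Real.log_le_log (by positivity)
    have := Real.sin_le ht0.le
    nlinarith
  have hlb : Real.log (2*c) + Real.log t ≤ Real.log (2 * Real.sin t) := by
    rw [← Real.log_mul (by positivity) ht0.ne']
    apply Real.log_le_log (by positivity)
    have := hsin_lb t ht
    nlinarith
  rw [Real.norm_eq_abs, abs_le]
  constructor
  · have h1 := neg_abs_le (Real.log (2*c))
    have h2 := neg_abs_le (Real.log t)
    have h3 := abs_nonneg (Real.log 2)
    have h4 := abs_nonneg (Real.log t)
    linarith
  · have h1 := le_abs_self (Real.log 2)
    have h2 := le_abs_self (Real.log t)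
    have h3 := abs_nonneg (Real.log (2*c))
    have h4 := abs_nonneg (Real.log t)
    linarith

lemma hasDerivAt_Lob {α : ℝ} (h0 : 0 < α) (hπ : α < π) :
    HasDerivAt Lob (-Real.log (2 * Real.sin α)) α := by
  have hint := logsin_intervalIntegrable h0 hπ
  have hmeas : StronglyMeasurableAtFilter (fun t => Real.log (2 * Real.sin t)) (nhds α) volume :=
    ((Real.measurable_log.comp
      (Real.continuous_sin.measurable.const_mul 2)).stronglyMeasurable).stronglyMeasurableAtFilter
  have hsinα : 0 < Real.sin α := Real.sin_pos_of_pos_of_lt_pi h0 hπ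
  have hcont : ContinuousAt (fun t => Real.log (2 * Real.sin t)) α := by
    apply (Real.continuousAt_log (by positivity)).comp
    exact (Real.continuous_sin.continuousAt).const_mul 2
  have h := intervalIntegral.integral_hasDerivAt_right hint hmeas hcont
  exact h.neg

/-- The domain A where the triangle inequalities hold for (e^{x₁}, e^{x₂}, e^{x₃}). -/
def triA : Set (ℝ × ℝ × ℝ) :=
  {x | Real.exp x.1 < Real.exp x.2.1 + Real.exp x.2.2 ∧
       Real.exp x.2.1 < Real.exp x.2.2 + Real.exp x.1 ∧
       Real.exp x.2.2 < Real.exp x.1 + Real.exp x.2.1}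

/-- The angle opposite the side of length e^{x₁} (law of cosines). -/
noncomputable def ang1 (x : ℝ × ℝ × ℝ) : ℝ :=
  Real.arccos ((Real.exp (2*x.2.1) + Real.exp (2*x.2.2) - Real.exp (2*x.1)) /
    (2 * Real.exp x.2.1 * Real.exp x.2.2))

/-- The angle opposite the side of length e^{x₂}. -/
noncomputable def ang2 (x : ℝ × ℝ × ℝ) : ℝ :=
  Real.arccos ((Real.exp (2*x.2.2) + Real.exp (2*x.1) - Real.exp (2*x.2.1)) /
    (2 * Real.exp x.2.2 * Real.exp x.1))

/-- The angle opposite the side of length e^{x₃}. -/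
noncomputable def ang3 (x : ℝ × ℝ × ℝ) : ℝ :=
  Real.arccos ((Real.exp (2*x.1) + Real.exp (2*x.2.1) - Real.exp (2*x.2.2)) /
    (2 * Real.exp x.1 * Real.exp x.2.1))

/-- The triangle function f(x₁,x₂,x₃) = Σ αᵢxᵢ + Σ Л(αᵢ). -/
noncomputable def fTri (x : ℝ × ℝ × ℝ) : ℝ :=
  ang1 x * x.1 + ang2 x * x.2.1 + ang3 x * x.2.2 +
    Lob (ang1 x) + Lob (ang2 x) + Lob (ang3 x)

/-- Equation (6.5): the partial derivatives of f are the triangle angles. -/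
lemma exp_two_mul' (y : ℝ) : Real.exp (2*y) = Real.exp y ^ 2 := by
  rw [two_mul, Real.exp_add, sq]

lemma fTri_deriv1 (p : ℝ × ℝ × ℝ) (hp : p ∈ triA) :
    HasDerivAt (fun t => fTri (t, p.2.1, p.2.2)) (ang1 p) p.1 := by
  obtain ⟨x₁, b, c⟩ := p
  obtain ⟨h1, h2, h3⟩ := hp
  simp only [triA, Set.mem_setOf_eq] at h1 h2 h3
  set A := Real.exp x₁ with hA
  set B := Real.exp b with hB
  set C := Real.exp c with hC
  have hApos : 0 < A := Real.exp_pos _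
  have hBpos : 0 < B := Real.exp_pos _
  have hCpos : 0 < C := Real.exp_pos _
  set u1 : ℝ → ℝ := fun t => (B^2 + C^2 - (Real.exp t)^2) / (2*B*C) with hu1def
  set u2 : ℝ → ℝ := fun t => (C^2 + (Real.exp t)^2 - B^2) / (2*C*(Real.exp t)) with hu2def
  set u3 : ℝ → ℝ := fun t => ((Real.exp t)^2 + B^2 - C^2) / (2*(Real.exp t)*B) with hu3def
  have hv1 : u1 x₁ = (B^2+C^2-A^2)/(2*B*C) := by simp only [hu1def, hA]
  have hv2 : u2 x₁ = (C^2+A^2-B^2)/(2*C*A) := by simp only [hu2def, hA]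
  have hv3 : u3 x₁ = (A^2+B^2-C^2)/(2*A*B) := by simp only [hu3def, hA]
  -- bounds
  have b1l : -1 < u1 x₁ := by rw [hv1]; exact tri_neg_one_lt_u hApos hBpos hCpos h1
  have b1r : u1 x₁ < 1 := by rw [hv1]; exact tri_u_lt_one hApos hBpos hCpos h2 h3
  have b2l : -1 < u2 x₁ := by rw [hv2]; exact tri_neg_one_lt_u hBpos hCpos hApos h2
  have b2r : u2 x₁ < 1 := by rw [hv2]; exact tri_u_lt_one hBpos hCpos hApos h3 h1
  have b3l : -1 < u3 x₁ := by rw [hv3]; exact tri_neg_one_lt_u hCpos hApos hBpos h3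
  have b3r : u3 x₁ < 1 := by rw [hv3]; exact tri_u_lt_one hCpos hApos hBpos h1 h2
  set α₁ := Real.arccos (u1 x₁) with hα₁
  set α₂ := Real.arccos (u2 x₁) with hα₂
  set α₃ := Real.arccos (u3 x₁) with hα₃
  have hα₁pos : 0 < α₁ := Real.arccos_pos.2 b1r
  have hα₁lt : α₁ < π := arccos_lt_pi' b1l
  have hα₂pos : 0 < α₂ := Real.arccos_pos.2 b2r
  have hα₂lt : α₂ < π := arccos_lt_pi' b2l
  have hα₃pos : 0 < α₃ := Real.arccos_pos.2 b3r
  have hα₃lt : α₃ < π := arccos_lt_pi' b3l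
  -- derivatives of the angle functions
  have hexp : HasDerivAt (fun t => (Real.exp t)^2) (2 * A^2) x₁ := by
    have h := (Real.hasDerivAt_exp x₁).pow 2
    exact h.congr_deriv (by rw [← hA]; ring)
  have hd1' : HasDerivAt u1 ((-(2*A^2))/(2*B*C)) x₁ := by
    rw [hu1def]
    exact (((hasDerivAt_const x₁ (B^2+C^2)).sub hexp).congr_deriv (by ring)).div_const _
  obtain ⟨d₁, hd₁⟩ : ∃ d, HasDerivAt (fun t => Real.arccos (u1 t)) d x₁ :=
    ⟨_, (Real.hasDerivAt_arccos (ne_of_gt b1l) (ne_of_lt b1r)).comp x₁ hd1'⟩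
  obtain ⟨d₂, hd₂⟩ : ∃ d, HasDerivAt (fun t => Real.arccos (u2 t)) d x₁ := by
    have hnum : HasDerivAt (fun t => C^2 + (Real.exp t)^2 - B^2) (2*A^2) x₁ :=
      (((hasDerivAt_const x₁ (C^2)).add hexp).sub_const (B^2)).congr_deriv (by ring)
    have hden : HasDerivAt (fun t => 2*C*(Real.exp t)) (2*C*A) x₁ :=
      (Real.hasDerivAt_exp x₁).const_mul (2*C)
    obtain ⟨e, hu⟩ : ∃ e, HasDerivAt u2 e x₁ := by
      rw [hu2def]; exact ⟨_, hnum.div hden (by positivity)⟩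
    exact ⟨_, (Real.hasDerivAt_arccos (ne_of_gt b2l) (ne_of_lt b2r)).comp x₁ hu⟩
  obtain ⟨d₃, hd₃⟩ : ∃ d, HasDerivAt (fun t => Real.arccos (u3 t)) d x₁ := by
    have hnum : HasDerivAt (fun t => (Real.exp t)^2 + B^2 - C^2) (2*A^2) x₁ :=
      ((hexp.add_const (B^2)).sub_const (C^2)).congr_deriv (by ring)
    have hden : HasDerivAt (fun t => 2*(Real.exp t)*B) (2*A*B) x₁ := by
      have h := ((Real.hasDerivAt_exp x₁).const_mul 2).mul_const B
      convert h using 1 <;> rw [hA]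
    obtain ⟨e, hu⟩ : ∃ e, HasDerivAt u3 e x₁ := by
      rw [hu3def]; exact ⟨_, hnum.div hden (by positivity)⟩
    exact ⟨_, (Real.hasDerivAt_arccos (ne_of_gt b3l) (ne_of_lt b3r)).comp x₁ hu⟩
  -- the sum of the angle derivatives vanishes
  have hopen : ∀ᶠ t in nhds x₁,
      Real.exp t < B + C ∧ B < C + Real.exp t ∧ C < Real.exp t + B := by
    have hc : Filter.Tendsto (fun t => Real.exp t) (nhds x₁) (nhds A) :=
      Real.continuous_exp.continuousAt
    refine Filter.Eventually.and ?_ (Filter.Eventually.and ?_ ?_)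
    · exact hc.eventually_lt tendsto_const_nhds h1
    · exact tendsto_const_nhds.eventually_lt (hc.const_add C) (by linarith)
    · exact tendsto_const_nhds.eventually_lt (hc.add_const B) (by linarith)
  have hsum0 : d₁ + d₂ + d₃ = 0 := by
    have hS : HasDerivAt
        (fun t => Real.arccos (u1 t) + Real.arccos (u2 t) + Real.arccos (u3 t))
        (d₁ + d₂ + d₃) x₁ := (hd₁.add hd₂).add hd₃
    have hconst : HasDerivAt
        (fun t => Real.arccos (u1 t) + Real.arccos (u2 t) + Real.arccos (u3 t)) 0 x₁ := by
      apply (hasDerivAt_const x₁ π).congr_of_eventuallyEq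
      filter_upwards [hopen] with t ht
      obtain ⟨k1, k2, k3⟩ := ht
      exact tri_arccos_sum (Real.exp_pos t) hBpos hCpos k1 k2 k3
    exact hS.unique hconst
  -- law of sines
  have hsin1 : 0 < Real.sin α₁ := Real.sin_pos_of_pos_of_lt_pi hα₁pos hα₁lt
  have hsin2 : 0 < Real.sin α₂ := Real.sin_pos_of_pos_of_lt_pi hα₂pos hα₂lt
  have hsin3 : 0 < Real.sin α₃ := Real.sin_pos_of_pos_of_lt_pi hα₃pos hα₃lt
  have hlos2 : A * Real.sin α₂ = B * Real.sin α₁ := by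
    have h := tri_law_of_sines hApos hBpos hCpos h1 h2 h3
    rw [hα₂, hα₁, hv2, hv1]
    exact h
  have hlos3 : A * Real.sin α₃ = C * Real.sin α₁ := by
    have h := tri_law_of_sines hApos hCpos hBpos (by linarith) (by linarith) (by linarith)
    rw [hα₃, hα₁, hv3, hv1,
      show (A^2+B^2-C^2)/(2*A*B) = (B^2+A^2-C^2)/(2*B*A) by ring_nf,
      show (B^2+C^2-A^2)/(2*B*C) = (C^2+B^2-A^2)/(2*C*B) by ring_nf]
    exact h
  have hk2 : Real.log (2 * Real.sin α₂) = Real.log (2 * Real.sin α₁) - x₁ + b := by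
    have h2s : 2 * Real.sin α₂ = (2 * Real.sin α₁) * B / A := by
      field_simp
      linarith [hlos2]
    rw [h2s, Real.log_div (by positivity) hApos.ne', Real.log_mul (by positivity) hBpos.ne',
      hA, hB, Real.log_exp, Real.log_exp]
    ring
  have hk3 : Real.log (2 * Real.sin α₃) = Real.log (2 * Real.sin α₁) - x₁ + c := by
    have h3s : 2 * Real.sin α₃ = (2 * Real.sin α₁) * C / A := by
      field_simp
      linarith [hlos3]
    rw [h3s, Real.log_div (by positivity) hApos.ne', Real.log_mul (by positivity) hCpos.ne',
      hA, hC, Real.log_exp, Real.log_exp]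
    ring
  -- Lob derivatives
  have hLob1 : HasDerivAt (fun t => Lob (Real.arccos (u1 t)))
      (-Real.log (2 * Real.sin α₁) * d₁) x₁ :=
    by have := (hasDerivAt_Lob hα₁pos hα₁lt).comp x₁ hd₁; exact this
  have hLob2 : HasDerivAt (fun t => Lob (Real.arccos (u2 t)))
      (-Real.log (2 * Real.sin α₂) * d₂) x₁ :=
    by have := (hasDerivAt_Lob hα₂pos hα₂lt).comp x₁ hd₂; exact this
  have hLob3 : HasDerivAt (fun t => Lob (Real.arccos (u3 t)))
      (-Real.log (2 * Real.sin α₃) * d₃) x₁ :=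
    by have := (hasDerivAt_Lob hα₃pos hα₃lt).comp x₁ hd₃; exact this
  -- assemble
  have hF : HasDerivAt (fun t =>
      Real.arccos (u1 t) * t + Real.arccos (u2 t) * b + Real.arccos (u3 t) * c +
        Lob (Real.arccos (u1 t)) + Lob (Real.arccos (u2 t)) + Lob (Real.arccos (u3 t)))
      (d₁ * x₁ + α₁ * 1 + d₂ * b + d₃ * c +
        (-Real.log (2 * Real.sin α₁) * d₁) + (-Real.log (2 * Real.sin α₂) * d₂) +
        (-Real.log (2 * Real.sin α₃) * d₃)) x₁ := by
    exact (((((hd₁.mul (hasDerivAt_id x₁)).add (hd₂.mul_const b)).add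
      (hd₃.mul_const c)).add hLob1).add hLob2).add hLob3
  have hFeq : (fun t : ℝ => fTri (t, b, c)) = (fun t =>
      Real.arccos (u1 t) * t + Real.arccos (u2 t) * b + Real.arccos (u3 t) * c +
        Lob (Real.arccos (u1 t)) + Lob (Real.arccos (u2 t)) + Lob (Real.arccos (u3 t))) := by
    funext t
    simp only [fTri, ang1, ang2, ang3, hu1def, hu2def, hu3def, exp_two_mul', hB, hC]
  have hval : d₁ * x₁ + α₁ * 1 + d₂ * b + d₃ * c +
      (-Real.log (2 * Real.sin α₁) * d₁) + (-Real.log (2 * Real.sin α₂) * d₂) +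
      (-Real.log (2 * Real.sin α₃) * d₃) = α₁ := by
    rw [hk2, hk3]
    linear_combination (x₁ - Real.log (2 * Real.sin α₁)) * hsum0
  have hang : ang1 (x₁, b, c) = α₁ := by
    simp only [ang1, hα₁, hu1def, hA, hB, hC, exp_two_mul']
  rw [show (x₁, b, c).1 = x₁ from rfl]
  rw [hFeq, hang, ← hval]
  exact hF

lemma fTri_cyc (p q r : ℝ) : fTri (p, q, r) = fTri (q, r, p) := by
  simp only [fTri, ang1, ang2, ang3]
  ring

theorem fTri_partial_deriv (x : ℝ × ℝ × ℝ) (hx : x ∈ triA) :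
    HasDerivAt (fun t => fTri (t, x.2.1, x.2.2)) (ang1 x) x.1 ∧
    HasDerivAt (fun t => fTri (x.1, t, x.2.2)) (ang2 x) x.2.1 ∧
    HasDerivAt (fun t => fTri (x.1, x.2.1, t)) (ang3 x) x.2.2 := by
  obtain ⟨h1, h2, h3⟩ := hx
  refine ⟨?_, ?_, ?_⟩
  · exact fTri_deriv1 x ⟨h1, h2, h3⟩
  · have h := fTri_deriv1 (x.2.1, x.2.2, x.1) ⟨h2, h3, h1⟩
    have heq : (fun t => fTri (x.1, t, x.2.2)) = (fun t => fTri (t, x.2.2, x.1)) := by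
      funext t
      exact fTri_cyc x.1 t x.2.2
    rw [heq]
    exact h
  · have h := fTri_deriv1 (x.2.2, x.1, x.2.1) ⟨h3, h1, h2⟩
    have heq : (fun t => fTri (x.1, x.2.1, t)) = (fun t => fTri (t, x.1, x.2.1)) := by
      funext t
      rw [fTri_cyc x.1 x.2.1 t, fTri_cyc x.2.1 t x.1]
    rw [heq]
    exact h
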